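/- arXiv:2205.00611 — 4 statements merged into one kernel-verified Lean document; each statement's English description precedes it below -/
import Mathlib

section
/- Let n = 2^k be a power of 2 and d ≤ n an even integer, with n a prime power. Let w ∈ {k,−k}^d satisfy Σ_i w_i = 0, and let P = {i : w_i > 0}, N = {i : w_i < 0}, so |P| = |N| = d/2. Define the matrix M whose rows are indexed by set-multilinear monomials over the variable sets (X_i)_{i∈P}, columns by set-multilinear monomials over (X_i)_{i∈N}, and whose (m₁, m₂) entry is the coefficient of m₁·m₂ in NW_{n,d}. Then M is a permutation matrix; in particular, it has full rank n^{d/2}. -/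
open MvPolynomial

lemma prod_monomial_one {ι σ R : Type*} [CommSemiring R] (s : Finset ι) (f : ι → (σ →₀ ℕ)) :
    ∏ j ∈ s, (monomial (f j) (1:R)) = monomial (∑ j ∈ s, f j) 1 := by
  induction s using Finset.cons_induction with
  | empty => simp
  | cons a s ha ih => rw [Finset.prod_cons, Finset.sum_cons, ih, monomial_mul, one_mul]

lemma sum_single_pair {d n : ℕ} (g : Fin d → Fin n) :
    (∑ j : Fin d, Finsupp.single ((j, g j) : Fin d × Fin n) 1) =
    Finsupp.equivFunOnFinite.symm (fun p => if p.2 = g p.1 then 1 else 0) := by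
  ext p
  rw [Finsupp.finset_sum_apply]
  rw [Finset.sum_eq_single_of_mem p.1 (Finset.mem_univ _)]
  · simp [Finsupp.single_apply, Prod.ext_iff, eq_comm]
  · intro j _ hj
    simp [Finsupp.single_apply, Prod.ext_iff, hj]

lemma indicator_eq_iff {d n : ℕ} (x y : Fin d → Fin n) :
    ((fun p : Fin d × Fin n => if p.2 = x p.1 then (1:ℕ) else 0) =
      fun p => if p.2 = y p.1 then 1 else 0) ↔ x = y := by
  constructor
  · intro h
    funext j
    have := congrFun h (j, x j)
    by_contra hne
    simp [hne] at this
  · rintro rfl; rfl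

lemma card_pos_neg {d k : ℕ} (hk : 1 ≤ k) (w : Fin d → ℤ)
    (hw : ∀ i, w i = k ∨ w i = -(k:ℤ)) (hsum : ∑ i, w i = 0) :
    Fintype.card {i : Fin d // 0 < w i} = d / 2 ∧
      Fintype.card {i : Fin d // w i < 0} = d / 2 := by
  classical
  have hk0 : (0:ℤ) < k := by exact_mod_cast hk
  set p := Finset.univ.filter (fun i : Fin d => 0 < w i) with hp
  set q := Finset.univ.filter (fun i : Fin d => w i < 0) with hqd
  have hq : q = Finset.univ.filter (fun i : Fin d => ¬ 0 < w i) := by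
    apply Finset.filter_congr
    intro i _
    rcases hw i with h | h <;> simp <;> omega
  have hcards : p.card + q.card = d := by
    rw [hq, Finset.card_filter_add_card_filter_not, Finset.card_univ, Fintype.card_fin]
  have hsump : ∑ i ∈ p, w i = (p.card : ℤ) * k := by
    rw [Finset.sum_congr rfl (fun i hi => ?_), Finset.sum_const, nsmul_eq_mul]
    rcases hw (i : Fin d) with h | h
    · exact h
    · exfalso; simp [hp] at hi; omega
  have hsumq : ∑ i ∈ q, w i = (q.card : ℤ) * (-k) := by
    rw [Finset.sum_congr rfl (fun i hi => ?_), Finset.sum_const, nsmul_eq_mul]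
    rcases hw (i : Fin d) with h | h
    · exfalso; simp [hqd] at hi; omega
    · exact h
  have hsplit : ∑ i ∈ p, w i + ∑ i ∈ q, w i = 0 := by
    rw [hq, Finset.sum_filter_add_sum_filter_not]; exact hsum
  rw [hsump, hsumq] at hsplit
  have h1 : p.card = q.card := by nlinarith [hsplit]
  constructor
  · rw [Fintype.card_subtype, ← hp]; omega
  · rw [Fintype.card_subtype, ← hqd]; omega

/-- The Nisan–Wigderson polynomial `NW_{n,d}` with `n = 2^k`, over a field `K` of
size `n` identified with `Fin n` via `φ`: the sum over all polynomials `f` of degree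
`< d/2` (encoded by coefficient vectors `c : Fin (d/2) → K`) of `∏_{j ∈ [d]} x_{f(j), j}`.
Variables are indexed by pairs (column, row) in `Fin d × Fin n`. -/
noncomputable def NW (k d : ℕ) (K : Type) [Field K] [Fintype K]
    (φ : Fin (2 ^ k) ≃ K) (hd : d ≤ 2 ^ k) : MvPolynomial (Fin d × Fin (2 ^ k)) K :=
  ∑ c : Fin (d / 2) → K, ∏ j : Fin d,
    X (j, φ.symm (∑ t : Fin (d / 2), c t * (φ (Fin.castLE hd j)) ^ (t : ℕ)))

/-- The exponent vector of the set-multilinear monomial `m₁ · m₂`, where `m₁` picks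
one variable from each set `X_i` with `w i > 0` and `m₂` picks one from each set with
`w i < 0`. -/
noncomputable def expVec {d n : ℕ} (w : Fin d → ℤ)
    (a : {i : Fin d // 0 < w i} → Fin n) (b : {i : Fin d // w i < 0} → Fin n) :
    (Fin d × Fin n) →₀ ℕ :=
  Finsupp.equivFunOnFinite.symm fun p =>
    if h : 0 < w p.1 then (if p.2 = a ⟨p.1, h⟩ then 1 else 0)
    else if h' : w p.1 < 0 then (if p.2 = b ⟨p.1, h'⟩ then 1 else 0) else 0

/-- The partial derivative matrix `M_w(f)`: rows indexed by set-multilinear monomials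
over the positive sets, columns by set-multilinear monomials over the negative sets,
entries the coefficients of the products in `f`. -/
noncomputable def Mw {d n : ℕ} {K : Type} [Field K] (w : Fin d → ℤ)
    (f : MvPolynomial (Fin d × Fin n) K) :
    Matrix ({i : Fin d // 0 < w i} → Fin n) ({i : Fin d // w i < 0} → Fin n) K :=
  fun a b => MvPolynomial.coeff (expVec w a b) f

/-- for a balanced word `w ∈ {k,-k}^d`, the partial derivative matrix of
`NW_{n,d}` (with `n = 2^k`) is a permutation matrix; in particular it has full rank
`n^{d/2}`. -/
theorem stmt1 (k d : ℕ) (hk : 1 ≤ k) (hd2 : 2 ∣ d) (hd : d ≤ 2 ^ k)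
    (K : Type) [Field K] [Fintype K] (hK : Fintype.card K = 2 ^ k)
    (φ : Fin (2 ^ k) ≃ K)
    (w : Fin d → ℤ) (hw : ∀ i, w i = k ∨ w i = -(k : ℤ)) (hsum : ∑ i, w i = 0) :
    (∃ e : ({i : Fin d // 0 < w i} → Fin (2 ^ k)) ≃ ({i : Fin d // w i < 0} → Fin (2 ^ k)),
        ∀ a b, Mw w (NW k d K φ hd) a b = if b = e a then 1 else 0) ∧
      (Mw w (NW k d K φ hd)).rank = (2 ^ k) ^ (d / 2) := by
  classical
  have hk0 : (0:ℤ) < k := by exact_mod_cast hk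
  have hPN : ∀ i : Fin d, ¬ 0 < w i → w i < 0 := by
    intro i h; rcases hw i with h1 | h1 <;> omega
  obtain ⟨hcP, hcN⟩ := card_pos_neg hk w hw hsum
  let pe : Fin (d/2) ≃ {i : Fin d // 0 < w i} := (Fintype.equivFinOfCardEq hcP).symm
  let ne : Fin (d/2) ≃ {i : Fin d // w i < 0} := (Fintype.equivFinOfCardEq hcN).symm
  set pt : Fin d → K := fun j => φ (Fin.castLE hd j) with hptdef
  have hpt : Function.Injective pt := by
    intro i j h
    exact Fin.castLE_injective hd (φ.injective h)
  set A : Matrix (Fin (d/2)) (Fin (d/2)) K :=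
    Matrix.vandermonde (fun r => pt (pe r).1) with hAdef
  set B : Matrix (Fin (d/2)) (Fin (d/2)) K :=
    Matrix.vandermonde (fun r => pt (ne r).1) with hBdef
  have hA : IsUnit A := by
    rw [Matrix.isUnit_iff_isUnit_det, isUnit_iff_ne_zero]
    exact Matrix.det_vandermonde_ne_zero_iff.mpr
      (hpt.comp (Subtype.val_injective.comp pe.injective))
  have hB : IsUnit B := by
    rw [Matrix.isUnit_iff_isUnit_det, isUnit_iff_ne_zero]
    exact Matrix.det_vandermonde_ne_zero_iff.mpr
      (hpt.comp (Subtype.val_injective.comp ne.injective))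
  have bijA : Function.Bijective A.mulVec :=
    ⟨Matrix.mulVec_injective_iff_isUnit.2 hA, Matrix.mulVec_surjective_iff_isUnit.2 hA⟩
  have bijB : Function.Bijective B.mulVec :=
    ⟨Matrix.mulVec_injective_iff_isUnit.2 hB, Matrix.mulVec_surjective_iff_isUnit.2 hB⟩
  set E : (Fin (d/2) → K) → Fin d → K :=
    fun c j => ∑ t : Fin (d/2), c t * pt j ^ (t:ℕ) with hEdef
  let EvP : (Fin (d/2) → K) ≃ ({i : Fin d // 0 < w i} → K) :=
    (Equiv.ofBijective A.mulVec bijA).trans (pe.arrowCongr (Equiv.refl K))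
  let EvN : (Fin (d/2) → K) ≃ ({i : Fin d // w i < 0} → K) :=
    (Equiv.ofBijective B.mulVec bijB).trans (ne.arrowCongr (Equiv.refl K))
  have hEvP : ∀ c (i : {i : Fin d // 0 < w i}), EvP c i = E c i.1 := by
    intro c i
    show A.mulVec c (pe.symm i) = _
    simp [hAdef, hEdef, Matrix.mulVec, dotProduct, Matrix.vandermonde, mul_comm]
  have hEvN : ∀ c (i : {i : Fin d // w i < 0}), EvN c i = E c i.1 := by
    intro c i
    show B.mulVec c (ne.symm i) = _
    simp [hBdef, hEdef, Matrix.mulVec, dotProduct, Matrix.vandermonde, mul_comm]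
  let e : ({i : Fin d // 0 < w i} → Fin (2^k)) ≃ ({i : Fin d // w i < 0} → Fin (2^k)) :=
    (Equiv.piCongrRight fun _ => φ).trans
      (EvP.symm.trans (EvN.trans (Equiv.piCongrRight fun _ => φ.symm)))
  have heq : ∀ a b, (b = e a ↔ EvN (EvP.symm fun i => φ (a i)) = fun i => φ (b i)) := by
    intro a b
    have hea : e a = fun i => φ.symm (EvN (EvP.symm fun i => φ (a i)) i) := rfl
    rw [hea, funext_iff, funext_iff]
    constructor
    · intro h i; rw [h i, Equiv.apply_symm_apply]
    · intro h i; rw [h i, Equiv.symm_apply_apply]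
  have hNW : ∀ a b, Mw w (NW k d K φ hd) a b = if b = e a then 1 else 0 := by
    intro a b
    set sel : Fin d → Fin (2^k) :=
      fun j => if h : 0 < w j then a ⟨j, h⟩ else b ⟨j, hPN j h⟩ with hseldef
    have hexp : expVec w a b =
        Finsupp.equivFunOnFinite.symm (fun p => if p.2 = sel p.1 then 1 else 0) := by
      unfold expVec; congr 1; funext p
      by_cases h : 0 < w p.1
      · simp [h, hseldef]
      · simp [h, hPN p.1 h, hseldef]
    have hprod : ∀ g : Fin d → Fin (2^k),
        (∏ j : Fin d, (X (j, g j) : MvPolynomial (Fin d × Fin (2^k)) K))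
          = monomial (∑ j : Fin d, Finsupp.single (j, g j) 1) 1 := by
      intro g
      rw [← prod_monomial_one]
      exact Finset.prod_congr rfl fun j _ => rfl
    have hcoeff : Mw w (NW k d K φ hd) a b =
        ∑ c : Fin (d/2) → K,
          if (Finsupp.equivFunOnFinite.symm
                (fun p : Fin d × Fin (2^k) =>
                  if p.2 = φ.symm (E c p.1) then 1 else 0)) = expVec w a b
          then (1:K) else 0 := by
      show MvPolynomial.coeff _ (NW k d K φ hd) = _
      rw [NW, MvPolynomial.coeff_sum]
      refine Finset.sum_congr rfl fun c _ => ?_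
      rw [hprod, sum_single_pair, MvPolynomial.coeff_monomial]
    have hcond : ∀ c : Fin (d/2) → K,
        ((Finsupp.equivFunOnFinite.symm
            (fun p : Fin d × Fin (2^k) =>
              if p.2 = φ.symm (E c p.1) then 1 else 0)) = expVec w a b)
          ↔ (c = EvP.symm (fun i => φ (a i)) ∧ EvN c = fun i => φ (b i)) := by
      intro c
      rw [hexp, EmbeddingLike.apply_eq_iff_eq]
      have hsplit : ((fun j => φ.symm (E c j)) = sel)
          ↔ ((EvP c = fun i => φ (a i)) ∧ (EvN c = fun i => φ (b i))) := by
        rw [funext_iff, funext_iff, funext_iff]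
        constructor
        · intro h
          constructor
          · intro i
            rw [hEvP]
            have := h i.1
            rw [hseldef] at this
            simp only [i.2, dif_pos] at this
            rw [← this, Equiv.apply_symm_apply]
          · intro i
            rw [hEvN]
            have := h i.1
            have hni : ¬ 0 < w i.1 := by have := i.2; omega
            rw [hseldef] at this
            simp only [hni, dif_neg, not_false_iff] at this
            rw [← this, Equiv.apply_symm_apply]
        · rintro ⟨h1, h2⟩ j
          simp only [hseldef]
          by_cases hj : 0 < w j
          · rw [dif_pos hj, Equiv.symm_apply_eq, ← h1 ⟨j, hj⟩, hEvP]
          · rw [dif_neg hj, Equiv.symm_apply_eq, ← h2 ⟨j, hPN j hj⟩, hEvN]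
      exact (indicator_eq_iff (fun j => φ.symm (E c j)) sel).trans
        (hsplit.trans (and_congr_left' (Iff.symm (Equiv.eq_symm_apply EvP))))
    rw [hcoeff, Finset.sum_congr rfl (fun c _ => if_congr (hcond c) rfl rfl),
      Finset.sum_eq_single (EvP.symm fun i => φ (a i))]
    · by_cases hb : EvN (EvP.symm fun i => φ (a i)) = fun i => φ (b i)
      · rw [if_pos ⟨rfl, hb⟩, if_pos ((heq a b).mpr hb)]
      · rw [if_neg (fun hcc => hb hcc.2), if_neg (fun hba => hb ((heq a b).mp hba))]
    · intro c _ hc; rw [if_neg (fun hcc => hc hcc.1)]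
    · intro hmem; exact absurd (Finset.mem_univ _) hmem
  refine ⟨⟨e, hNW⟩, ?_⟩
  have hMeq : Mw w (NW k d K φ hd)
      = (1 : Matrix ({i : Fin d // w i < 0} → Fin (2^k))
            ({i : Fin d // w i < 0} → Fin (2^k)) K).submatrix e (Equiv.refl _) := by
    ext a b
    rw [hNW a b, Matrix.submatrix_apply, Equiv.refl_apply, Matrix.one_apply]
    by_cases h : b = e a
    · rw [if_pos h, if_pos h.symm]
    · rw [if_neg h, if_neg (fun hh => h hh.symm)]
  have hsurj : Function.Surjective (Mw w (NW k d K φ hd)).mulVecLin := by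
    intro y
    refine ⟨fun b => y (e.symm b), ?_⟩
    funext a2
    rw [Matrix.mulVecLin_apply]
    show ∑ b2, Mw w (NW k d K φ hd) a2 b2 * y (e.symm b2) = y a2
    rw [Finset.sum_eq_single (e a2)]
    · rw [hNW, if_pos rfl, one_mul, Equiv.symm_apply_apply]
    · intro b2 _ hb2
      rw [hNW, if_neg hb2, zero_mul]
    · intro hmem; exact absurd (Finset.mem_univ _) hmem
  rw [Matrix.rank, LinearMap.range_eq_top.mpr hsurj, finrank_top, Module.finrank_pi,
    Fintype.card_fun, Fintype.card_fin, hcP]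
end

section
/- Let (S_1,...,S_t) be a partition of [d], let w ∈ ℝ^d with nonzero entries, and for each i let f_i be set-multilinear with respect to (X_j)_{j∈S_i}. If f = f_1·f_2···f_t, then rank(M_w(f)) = ∏_{i∈[t]} rank(M_{w|_{S_i}}(f_i)), where M_w is the partial derivative matrix; equivalently, M_w(f) equals the tensor (Kronecker) product of the matrices M_{w|_{S_i}}(f_i) up to row and column permutations. -/
open MvPolynomial

variable {d : ℕ} {K : Type} [Field K] {nsz : Fin d → ℕ}

/-- Set-multilinearity with respect to the sub-tuple of variable sets indexed by `S`,
for variables `Σ i : Fin d, Fin (nsz i)` (set `X_i` has `nsz i` variables). -/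
def IsSML (S : Finset (Fin d)) (P : MvPolynomial (Σ i : Fin d, Fin (nsz i)) K) : Prop :=
  ∀ m ∈ P.support,
    (∀ v, m v ≤ 1) ∧
    (∀ i : Fin d, i ∈ S → (m.support.filter fun v => v.1 = i).card = 1) ∧
    (∀ i : Fin d, i ∉ S → ∀ r : Fin (nsz i), m ⟨i, r⟩ = 0)

/-- Exponent vector of the set-multilinear monomial over the sets indexed by `S`
determined by `a` (positive part of `w` within `S`) and `b` (negative part). -/
noncomputable def expVecS (w : Fin d → ℝ) (S : Finset (Fin d))
    (a : ∀ i : {i : Fin d // i ∈ S ∧ 0 < w i}, Fin (nsz i))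
    (b : ∀ i : {i : Fin d // i ∈ S ∧ w i < 0}, Fin (nsz i)) :
    (Σ i : Fin d, Fin (nsz i)) →₀ ℕ :=
  Finsupp.equivFunOnFinite.symm fun p =>
    if h : p.1 ∈ S ∧ 0 < w p.1 then (if p.2 = a ⟨p.1, h⟩ then 1 else 0)
    else if h' : p.1 ∈ S ∧ w p.1 < 0 then (if p.2 = b ⟨p.1, h'⟩ then 1 else 0) else 0

/-- The partial derivative matrix `M_{w|_S}(f)` of `f` relative to the restriction of
the word `w` to the indices in `S`. -/
noncomputable def MwS (w : Fin d → ℝ) (S : Finset (Fin d))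
    (f : MvPolynomial (Σ i : Fin d, Fin (nsz i)) K) :
    Matrix (∀ i : {i : Fin d // i ∈ S ∧ 0 < w i}, Fin (nsz i))
      (∀ i : {i : Fin d // i ∈ S ∧ w i < 0}, Fin (nsz i)) K :=
  fun a b => MvPolynomial.coeff (expVecS w S a b) f

open Matrix

section LinAlg
variable {K : Type} [Field K]

lemma rank_reindex' {m n m' n' : Type*} [Fintype n] [Fintype n']
    (e₁ : m ≃ m') (e₂ : n ≃ n') (A : Matrix m n K) :
    (Matrix.reindex e₁ e₂ A).rank = A.rank := by
  rw [Matrix.rank, Matrix.rank, Matrix.mulVecLin_reindex, LinearMap.range_comp,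
    LinearMap.range_comp_of_range_eq_top _ (LinearEquiv.range _),
    LinearEquiv.finrank_map_eq]

end LinAlg

section Fact
variable {K : Type} [Field K] {m n : Type} [Fintype m] [Fintype n] [DecidableEq m] [DecidableEq n]

lemma exists_rank_factorization (A : Matrix m n K) :
    ∃ (C : Matrix m (Fin A.rank) K) (R : Matrix (Fin A.rank) n K)
      (L : Matrix (Fin A.rank) m K) (R' : Matrix n (Fin A.rank) K),
      A = C * R ∧ L * C = 1 ∧ R * R' = 1 := by
  set V := LinearMap.range A.mulVecLin with hV
  have hb : Module.finrank K V = A.rank := rfl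
  let b : Module.Basis (Fin A.rank) K V := Module.finBasisOfFinrankEq K V hb
  let inc : V →ₗ[K] (m → K) := V.subtype
  let cor : (n → K) →ₗ[K] V := A.mulVecLin.rangeRestrict
  obtain ⟨g, hg⟩ := inc.exists_leftInverse_of_injective V.ker_subtype
  obtain ⟨h, hh⟩ := cor.exists_rightInverse_of_surjective A.mulVecLin.range_rangeRestrict
  refine ⟨LinearMap.toMatrix b (Pi.basisFun K m) inc,
    LinearMap.toMatrix (Pi.basisFun K n) b cor,
    LinearMap.toMatrix (Pi.basisFun K m) b g,
    LinearMap.toMatrix b (Pi.basisFun K n) h, ?_, ?_, ?_⟩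
  · rw [← LinearMap.toMatrix_comp]
    have : inc ∘ₗ cor = A.mulVecLin := LinearMap.subtype_comp_codRestrict _ _ _
    rw [this]
    ext i j
    simp [LinearMap.toMatrix_apply, Matrix.mulVecLin_apply, Matrix.mulVec_single_one]
  · rw [← LinearMap.toMatrix_comp, hg, LinearMap.toMatrix_id]
  · rw [← LinearMap.toMatrix_comp, hh, LinearMap.toMatrix_id]

end Fact

open Kronecker in
lemma rank_kronecker {K : Type} [Field K] {m n m' n' : Type} [Fintype m] [Fintype n]
    [Fintype m'] [Fintype n'] (A : Matrix m n K) (B : Matrix m' n' K) :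
    (A ⊗ₖ B).rank = A.rank * B.rank := by
  classical
  obtain ⟨C, R, L, R', hA, hLC, hRR⟩ := exists_rank_factorization A
  obtain ⟨C', R₂, L', R₂', hB, hLC', hRR'⟩ := exists_rank_factorization B
  apply le_antisymm
  · calc (A ⊗ₖ B).rank = ((C * R) ⊗ₖ (C' * R₂)).rank := by rw [← hA, ← hB]
    _ = ((C ⊗ₖ C') * (R ⊗ₖ R₂)).rank := by rw [Matrix.mul_kronecker_mul]
    _ ≤ (C ⊗ₖ C').rank := Matrix.rank_mul_le_left _ _
    _ ≤ Fintype.card (Fin A.rank × Fin B.rank) := Matrix.rank_le_card_width _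
    _ = A.rank * B.rank := by simp
  · have h1 : L * (C * R) * R' = 1 := by
      rw [← Matrix.mul_assoc, Matrix.mul_assoc (L*C), hLC, Matrix.one_mul, hRR]
    have h2 : L' * (C' * R₂) * R₂' = 1 := by
      rw [← Matrix.mul_assoc, Matrix.mul_assoc (L'*C'), hLC', Matrix.one_mul, hRR']
    have key : (L ⊗ₖ L') * ((C * R) ⊗ₖ (C' * R₂)) * (R' ⊗ₖ R₂')
        = (1 : Matrix (Fin A.rank × Fin B.rank) (Fin A.rank × Fin B.rank) K) := by
      rw [← Matrix.mul_kronecker_mul, ← Matrix.mul_kronecker_mul, h1, h2,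
        Matrix.one_kronecker_one]
    have hcard : A.rank * B.rank
        = (1 : Matrix (Fin A.rank × Fin B.rank) (Fin A.rank × Fin B.rank) K).rank := by
      rw [Matrix.rank_one]
      simp
    calc A.rank * B.rank
        = ((L ⊗ₖ L') * ((C * R) ⊗ₖ (C' * R₂)) * (R' ⊗ₖ R₂')).rank := by rw [key, ← hcard]
    _ ≤ ((L ⊗ₖ L') * ((C * R) ⊗ₖ (C' * R₂))).rank := Matrix.rank_mul_le_left _ _
    _ ≤ ((C * R) ⊗ₖ (C' * R₂)).rank := Matrix.rank_mul_le_right _ _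
    _ = (A ⊗ₖ B).rank := by rw [← hA, ← hB]

open Kronecker in
lemma rank_pi_prod {K : Type} [Field K] :
    ∀ (t : ℕ) (α β : Fin t → Type) (_ : ∀ j, Fintype (α j)) (_ : ∀ j, Fintype (β j))
      (M : ∀ j, Matrix (α j) (β j) K),
      (Matrix.of fun (a : ∀ j, α j) (b : ∀ j, β j) => ∏ j, M j (a j) (b j)).rank
        = ∏ j, (M j).rank := by
  intro t
  induction t with
  | zero =>
    intro α β _ _ M
    classical
    let e : (∀ j : Fin 0, α j) ≃ (∀ j : Fin 0, β j) := Equiv.ofUnique _ _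
    have : (Matrix.of fun (a : ∀ j, α j) (b : ∀ j, β j) => ∏ j, M j (a j) (b j))
        = Matrix.reindex (Equiv.refl _) e (1 : Matrix (∀ j, α j) (∀ j, α j) K) := by
      ext a b
      simp [Matrix.one_apply, Subsingleton.elim (e.symm b) a]
    rw [this, rank_reindex', Matrix.rank_one]
    simp
  | succ t ih =>
    intro α β ia ib M
    let e₁ : α 0 × (∀ j : Fin t, α j.succ) ≃ ∀ j, α j := Fin.consEquiv α
    let e₂ : β 0 × (∀ j : Fin t, β j.succ) ≃ ∀ j, β j := Fin.consEquiv β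
    let N' := Matrix.of fun (a : ∀ j : Fin t, α j.succ) (b : ∀ j : Fin t, β j.succ) =>
      ∏ j, M j.succ (a j) (b j)
    have hre : Matrix.reindex e₁.symm e₂.symm
        (Matrix.of fun (a : ∀ j, α j) (b : ∀ j, β j) => ∏ j, M j (a j) (b j))
        = (M 0) ⊗ₖ N' := by
      ext ⟨x, g⟩ ⟨y, h⟩
      simp [N', e₁, e₂, Fin.prod_univ_succ, Fin.consEquiv]
    have := rank_reindex' e₁.symm e₂.symm
      (Matrix.of fun (a : ∀ j, α j) (b : ∀ j, β j) => ∏ j, M j (a j) (b j))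
    rw [← this, hre, rank_kronecker, ih _ _ (fun j => ia j.succ) (fun j => ib j.succ) (fun j => M j.succ),
      Fin.prod_univ_succ]

section Poly
open MvPolynomial
variable {σ : Type*} {K : Type} [Field K]

lemma coeff_mul_of_disjoint_vars (U : σ → Prop) [DecidablePred U]
    (p q : MvPolynomial σ K)
    (hp : ∀ n ∈ p.support, ∀ v, ¬ U v → n v = 0)
    (hq : ∀ n ∈ q.support, ∀ v, U v → n v = 0)
    (m : σ →₀ ℕ) :
    coeff m (p * q)
      = coeff (m.filter U) p * coeff (m.filter fun v => ¬ U v) q := by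
  classical
  rw [coeff_mul]
  have hsplit : m.filter U + m.filter (fun v => ¬ U v) = m :=
    Finsupp.filter_pos_add_filter_neg m _
  have hmem : (m.filter U, m.filter fun v => ¬ U v) ∈ Finset.HasAntidiagonal.antidiagonal m := by
    rw [Finset.HasAntidiagonal.mem_antidiagonal]; exact hsplit
  rw [Finset.sum_eq_single_of_mem _ hmem]
  intro x hx hne
  rw [Finset.HasAntidiagonal.mem_antidiagonal] at hx
  by_cases h1 : coeff x.1 p = 0
  · rw [h1, zero_mul]
  by_cases h2 : coeff x.2 q = 0
  · rw [h2, mul_zero]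
  exfalso; apply hne
  have hx1 := hp x.1 (mem_support_iff.mpr h1)
  have hx2 := hq x.2 (mem_support_iff.mpr h2)
  have e1 : x.1 = m.filter U := by
    ext v
    rw [Finsupp.filter_apply]
    by_cases hv : U v
    · rw [if_pos hv, ← hx]
      simp [hx2 v hv]
    · rw [if_neg hv]; exact hx1 v hv
  have e2 : x.2 = m.filter fun v => ¬ U v := by
    ext v
    rw [Finsupp.filter_apply]
    by_cases hv : U v
    · rw [if_neg (by simpa using hv)]; exact hx2 v hv
    · rw [if_pos hv, ← hx]
      simp [hx1 v hv]
  rw [← e1, ← e2]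

lemma support_finset_prod {ι : Type*} (T : Finset ι) (f : ι → MvPolynomial σ K)
    (P : ι → σ → Prop)
    (hf : ∀ j ∈ T, ∀ n ∈ (f j).support, ∀ v, ¬ P j v → n v = 0) :
    ∀ n ∈ (∏ j ∈ T, f j).support, ∀ v, (∀ j ∈ T, ¬ P j v) → n v = 0 := by
  classical
  induction T using Finset.induction_on with
  | empty =>
    intro n hn v _
    rw [Finset.prod_empty] at hn
    have h := MvPolynomial.mem_support_iff.mp hn
    rw [MvPolynomial.coeff_one] at h
    split_ifs at h with h0
    · simp [← h0]
    · exact absurd rfl h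
  | @insert j T' hj ih =>
    intro n hn v hv
    rw [Finset.prod_insert hj] at hn
    have := MvPolynomial.support_mul _ _ hn
    rw [Finset.mem_add] at this
    obtain ⟨a, ha, b, hb, rfl⟩ := this
    have h1 : a v = 0 := hf j (Finset.mem_insert_self _ _) a ha v (hv j (Finset.mem_insert_self _ _))
    have h2 : b v = 0 := ih (fun j' hj' => hf j' (Finset.mem_insert_of_mem hj')) b hb v
      (fun j' hj' => hv j' (Finset.mem_insert_of_mem hj'))
    simp [Finsupp.add_apply, h1, h2]

end Poly

section L2
open MvPolynomial
variable {d t : ℕ} {K : Type} [Field K] {nsz : Fin d → ℕ}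

lemma coeff_prod_sml (S : Fin t → Finset (Fin d))
    (hdisj : ∀ j k : Fin t, j ≠ k → ∀ x ∈ S j, x ∉ S k)
    (f : Fin t → MvPolynomial (Σ i : Fin d, Fin (nsz i)) K)
    (hf : ∀ j, ∀ n ∈ (f j).support, ∀ v : Σ i : Fin d, Fin (nsz i), v.1 ∉ S j → n v = 0)
    (T : Finset (Fin t)) :
    ∀ m : (Σ i : Fin d, Fin (nsz i)) →₀ ℕ,
      (∀ v ∈ m.support, ∃ j ∈ T, v.1 ∈ S j) →
      coeff m (∏ j ∈ T, f j)
        = ∏ j ∈ T, coeff (m.filter fun v => v.1 ∈ S j) (f j) := by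
  induction T using Finset.induction_on with
  | empty =>
    intro m hm
    have hm0 : m = 0 := by
      ext v
      by_contra h
      obtain ⟨j, hj, _⟩ := hm v (Finsupp.mem_support_iff.mpr h)
      exact absurd hj (Finset.notMem_empty j)
    subst hm0
    classical
    simp [coeff_one]
  | @insert j T' hj ih =>
    intro m hm
    rw [Finset.prod_insert hj]
    have hq : ∀ n ∈ (∏ k ∈ T', f k).support, ∀ v : Σ i : Fin d, Fin (nsz i),
        (fun v : Σ i : Fin d, Fin (nsz i) => v.1 ∈ S j) v → n v = 0 := by
      intro n hn v hv
      refine support_finset_prod T' f (fun k v => v.1 ∈ S k) (fun k _ => hf k) n hn v ?_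
      intro k hk hvk
      exact hdisj k j (fun e => hj (e ▸ hk)) v.1 hvk hv
    have key := coeff_mul_of_disjoint_vars
      (fun v : Σ i : Fin d, Fin (nsz i) => v.1 ∈ S j) (f j) (∏ k ∈ T', f k)
      (hf j) hq m
    rw [key, Finset.prod_insert hj]
    have hsupp : ∀ v ∈ (m.filter fun v : Σ i : Fin d, Fin (nsz i) => ¬ v.1 ∈ S j).support,
        ∃ k ∈ T', v.1 ∈ S k := by
      intro v hv
      rw [Finsupp.support_filter, Finset.mem_filter] at hv
      obtain ⟨hv1, hv2⟩ := hv
      obtain ⟨j', hj', hvj'⟩ := hm v hv1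
      rcases Finset.mem_insert.mp hj' with rfl | h
      · exact absurd hvj' hv2
      · exact ⟨j', h, hvj'⟩
    rw [ih _ hsupp]
    congr 1
    refine Finset.prod_congr rfl fun k hk => ?_
    congr 1
    ext v
    rw [Finsupp.filter_apply, Finsupp.filter_apply, Finsupp.filter_apply]
    by_cases hv : v.1 ∈ S k
    · rw [if_pos hv, if_pos hv]
      have hvj : ¬ v.1 ∈ S j := hdisj k j (fun e => hj (e ▸ hk)) v.1 hv
      rw [if_pos hvj]
    · rw [if_neg hv, if_neg hv]

end L2

section Final
open MvPolynomial

lemma filter_expVecS {d : ℕ} {nsz : Fin d → ℕ} (w : Fin d → ℝ) (T : Finset (Fin d))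
    (a : ∀ i : {i : Fin d // i ∈ (Finset.univ : Finset (Fin d)) ∧ 0 < w i}, Fin (nsz i))
    (b : ∀ i : {i : Fin d // i ∈ (Finset.univ : Finset (Fin d)) ∧ w i < 0}, Fin (nsz i)) :
    ((expVecS w Finset.univ a b).filter fun v : Σ i : Fin d, Fin (nsz i) => v.1 ∈ T)
      = expVecS w T (fun i => a ⟨i.1, ⟨Finset.mem_univ _, i.2.2⟩⟩)
          (fun i => b ⟨i.1, ⟨Finset.mem_univ _, i.2.2⟩⟩) := by
  ext v
  rw [Finsupp.filter_apply]
  by_cases hT : v.1 ∈ T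
  · rw [if_pos hT]
    by_cases hpos : 0 < w v.1
    · simp [expVecS, hpos, hT]
    · by_cases hneg : w v.1 < 0
      · simp [expVecS, hpos, hneg, hT]
      · simp [expVecS, hpos, hneg]
  · rw [if_neg hT]
    have h1 : ¬ (v.1 ∈ T ∧ 0 < w v.1) := fun h => hT h.1
    have h2 : ¬ (v.1 ∈ T ∧ w v.1 < 0) := fun h => hT h.1
    simp [expVecS, h1, h2]

/-- Splitting a dependent function over all of `Fin d` into its restrictions
to the parts of a partition. -/
noncomputable def splitEquiv {d t : ℕ} (S : Fin t → Finset (Fin d))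
    (hpart : ∀ x : Fin d, ∃! i, x ∈ S i) (Q : Fin d → Prop) (F : Fin d → Type) :
    (∀ i : {i : Fin d // i ∈ (Finset.univ : Finset (Fin d)) ∧ Q i}, F i) ≃
      (∀ j : Fin t, ∀ i : {i : Fin d // i ∈ S j ∧ Q i}, F i) where
  toFun a := fun _ i => a ⟨i.1, ⟨Finset.mem_univ _, i.2.2⟩⟩
  invFun g := fun i => g (hpart i.1).exists.choose
    ⟨i.1, ⟨(hpart i.1).exists.choose_spec, i.2.2⟩⟩
  left_inv a := rfl
  right_inv g := by
    funext j i
    obtain ⟨x, hx, hQ⟩ := i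
    have h : (hpart x).exists.choose = j :=
      (hpart x).unique (hpart x).exists.choose_spec hx
    subst h
    rfl

end Final

/-- multiplicativity of the rank of the partial derivative matrix.
If `(S_1,…,S_t)` is a partition of `[d]`, `w` has nonzero entries with `|X_i| = 2^{|w_i|}`,
each `f_i` is set-multilinear with respect to `(X_j)_{j ∈ S_i}`, and `f = f_1 ⋯ f_t`,
then `rank(M_w(f)) = ∏_i rank(M_{w|_{S_i}}(f_i))`. -/
theorem stmt3 (d t : ℕ) (K : Type) [Field K] (nsz : Fin d → ℕ)
    (w : Fin d → ℝ) (hw : ∀ i, w i ≠ 0)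
    (hsz : ∀ i, (nsz i : ℝ) = 2 ^ |w i|)
    (S : Fin t → Finset (Fin d))
    (hpart : ∀ x : Fin d, ∃! i, x ∈ S i)
    (f : Fin t → MvPolynomial (Σ i : Fin d, Fin (nsz i)) K)
    (hf : ∀ i, IsSML (S i) (f i)) :
    (MwS w Finset.univ (∏ i, f i)).rank = ∏ i, (MwS w (S i) (f i)).rank := by
  classical
  have hdisj : ∀ j k : Fin t, j ≠ k → ∀ x ∈ S j, x ∉ S k := by
    intro j k hjk x hj hk
    exact hjk ((hpart x).unique hj hk)
  have hfsupp : ∀ j, ∀ n ∈ (f j).support, ∀ v : Σ i : Fin d, Fin (nsz i),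
      v.1 ∉ S j → n v = 0 := by
    intro j n hn v hv
    exact (hf j n hn).2.2 v.1 hv v.2
  let eA := splitEquiv S hpart (fun i => 0 < w i) (fun i => Fin (nsz i))
  let eB := splitEquiv S hpart (fun i => w i < 0) (fun i => Fin (nsz i))
  let N := Matrix.of fun (a : ∀ j, ∀ i : {i : Fin d // i ∈ S j ∧ 0 < w i}, Fin (nsz i))
      (b : ∀ j, ∀ i : {i : Fin d // i ∈ S j ∧ w i < 0}, Fin (nsz i)) =>
      ∏ j, MwS w (S j) (f j) (a j) (b j)
  have hM : MwS w Finset.univ (∏ i, f i) = Matrix.reindex eA.symm eB.symm N := by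
    ext a b
    have : (Matrix.reindex eA.symm eB.symm N) a b = N (eA a) (eB b) := by
      simp [Matrix.reindex_apply, Matrix.submatrix_apply]
    rw [this]
    show coeff (expVecS w Finset.univ a b) (∏ i, f i)
      = ∏ j, MwS w (S j) (f j) (eA a j) (eB b j)
    rw [coeff_prod_sml S hdisj f hfsupp Finset.univ (expVecS w Finset.univ a b)
      (fun v _ => ⟨(hpart v.1).exists.choose, Finset.mem_univ _,
        (hpart v.1).exists.choose_spec⟩)]
    refine Finset.prod_congr rfl fun j _ => ?_
    show coeff _ (f j) = coeff (expVecS w (S j) (eA a j) (eB b j)) (f j)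
    congr 1
    exact filter_expVecS w (S j) a b
  rw [hM, rank_reindex', rank_pi_prod t _ _ (fun j => inferInstance) (fun j => inferInstance)
    (fun j => MwS w (S j) (f j))]
end

section
/- Let T ≥ 2 be a real number and let (S_1,...,S_ℓ) be a partition of a finite set [d] such that each |S_j| < T. Then there exists a coarsening (S'_1,...,S'_{ℓ'}) of this partition such that T/2 ≤ |S'_j| ≤ 3T/2 for every j, provided d ≥ T/2. Consequently, 2d/(3T) ≤ ℓ' ≤ 2d/T. -/
open Finset

lemma stmt7_chunk {α : Type*} [DecidableEq α] (T : ℝ) (hT : 0 < T)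
    (w : α → ℝ) (hw : ∀ a, 0 ≤ w a) :
    ∀ l : List α, l.Nodup → (∀ a ∈ l, w a < T / 2) →
    ∃ (cs : List (Finset α)) (pend : Finset α),
      (pend :: cs).Pairwise Disjoint ∧
      (∀ s ∈ pend :: cs, ∀ a ∈ s, a ∈ l) ∧
      (∀ a ∈ l, ∃ s ∈ pend :: cs, a ∈ s) ∧
      (∀ s ∈ cs, T / 2 ≤ ∑ a ∈ s, w a ∧ ∑ a ∈ s, w a < T) ∧
      ∑ a ∈ pend, w a < T / 2 := by
  intro l
  induction l with
  | nil =>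
    intro _ _
    exact ⟨[], ∅, by simp, by simp, by simp, by simp, by simpa using (by positivity : (0:ℝ) < T/2)⟩
  | cons a l ih =>
    intro hnd hsm
    obtain ⟨hal, hndl⟩ := List.nodup_cons.mp hnd
    obtain ⟨cs, pend, hdisj, hsub, hcov, hcs, hpend⟩ :=
      ih hndl (fun b hb => hsm b (List.mem_cons_of_mem a hb))
    have hap : a ∉ pend := fun h => hal (hsub pend (by simp) a h)
    have hacs : ∀ s ∈ cs, a ∉ s := fun s hs h => hal (hsub s (by simp [hs]) a h)
    have hsum' : ∑ b ∈ insert a pend, w b = w a + ∑ b ∈ pend, w b :=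
      Finset.sum_insert hap
    have hwa : w a < T / 2 := hsm a List.mem_cons_self
    have hdisj' : (insert a pend :: cs).Pairwise Disjoint := by
      rw [List.pairwise_cons]
      refine ⟨fun s hs => ?_, (List.pairwise_cons.mp hdisj).2⟩
      rw [Finset.disjoint_insert_left]
      exact ⟨hacs s hs, (List.pairwise_cons.mp hdisj).1 s hs⟩
    by_cases h : T / 2 ≤ w a + ∑ b ∈ pend, w b
    · refine ⟨insert a pend :: cs, ∅, ?_, ?_, ?_, ?_, by simpa using (by positivity : (0:ℝ) < T/2)⟩
      · rw [List.pairwise_cons]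
        exact ⟨fun s _ => Finset.disjoint_empty_left s, hdisj'⟩
      · intro s hs b hb
        rcases List.mem_cons.mp hs with h1 | hs'
        · subst h1; simp at hb
        · rcases List.mem_cons.mp hs' with h1 | h1
          · rcases Finset.mem_insert.mp (h1 ▸ hb) with h2 | h2
            · simp [h2]
            · exact List.mem_cons_of_mem a (hsub pend (by simp) b h2)
          · exact List.mem_cons_of_mem a (hsub s (by simp [h1]) b hb)
      · intro b hb
        rcases List.mem_cons.mp hb with h1 | h1
        · exact ⟨insert a pend, by simp, by simp [h1]⟩
        · obtain ⟨s, hs, hbs⟩ := hcov b h1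
          rcases List.mem_cons.mp hs with h2 | h2
          · exact ⟨insert a pend, by simp, by simp [h2 ▸ hbs]⟩
          · exact ⟨s, by simp [h2], hbs⟩
      · intro s hs
        rcases List.mem_cons.mp hs with h1 | h1
        · subst h1
          rw [hsum']
          exact ⟨h, by linarith⟩
        · exact hcs s h1
    · refine ⟨cs, insert a pend, hdisj', ?_, ?_, hcs, ?_⟩
      · intro s hs b hb
        rcases List.mem_cons.mp hs with h1 | h1
        · rcases Finset.mem_insert.mp (h1 ▸ hb) with h2 | h2
          · simp [h2]
          · exact List.mem_cons_of_mem a (hsub pend (by simp) b h2)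
        · exact List.mem_cons_of_mem a (hsub s (by simp [h1]) b hb)
      · intro b hb
        rcases List.mem_cons.mp hb with h1 | h1
        · exact ⟨insert a pend, by simp, by simp [h1]⟩
        · obtain ⟨s, hs, hbs⟩ := hcov b h1
          rcases List.mem_cons.mp hs with h2 | h2
          · exact ⟨insert a pend, by simp, by simp [h2 ▸ hbs]⟩
          · exact ⟨s, by simp [h2], hbs⟩
      · rw [hsum']
        linarith [not_le.mp h]

/-- clubbing: if `(S_1,…,S_ℓ)` is a partition of `[d]` with all blocks of
size `< T` (where `T ≥ 2` and `d ≥ T/2`), then there is a coarsening all of whose blocks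
have size in `[T/2, 3T/2]`; consequently the number `ℓ'` of blocks of the coarsening
satisfies `2d/(3T) ≤ ℓ' ≤ 2d/T`. -/
theorem stmt7 (d ℓ : ℕ) (T : ℝ) (hT : 2 ≤ T)
    (p : Fin ℓ → Finset (Fin d))
    (hpart : ∀ x : Fin d, ∃! j, x ∈ p j)
    (hsize : ∀ j, ((p j).card : ℝ) < T)
    (hd : T / 2 ≤ (d : ℝ)) :
    ∃ (ℓ' : ℕ) (q : Fin ℓ' → Finset (Fin d)) (c : Fin ℓ → Fin ℓ'),
      (∀ j, q j = (univ.filter fun i => c i = j).biUnion p) ∧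
      (∀ j, T / 2 ≤ ((q j).card : ℝ) ∧ ((q j).card : ℝ) ≤ 3 * T / 2) ∧
      2 * d / (3 * T) ≤ (ℓ' : ℝ) ∧ (ℓ' : ℝ) ≤ 2 * d / T := by
  classical
  have hT0 : (0:ℝ) < T := by linarith
  set w : Fin ℓ → ℝ := fun j => ((p j).card : ℝ) with hw_def
  have hw0 : ∀ j, 0 ≤ w j := fun j => Nat.cast_nonneg _
  have hpd : ∀ i j : Fin ℓ, i ≠ j → Disjoint (p i) (p j) := by
    intro i j hij
    rw [Finset.disjoint_left]
    intro x hxi hxj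
    exact hij ((hpart x).unique hxi hxj)
  have hcard : ∀ s : Finset (Fin ℓ), ((s.biUnion p).card : ℝ) = ∑ j ∈ s, w j := by
    intro s
    rw [Finset.card_biUnion (fun i _ j _ hij => hpd i j hij)]
    push_cast
    rfl
  have hdtot : (d : ℝ) = ∑ j : Fin ℓ, w j := by
    have huniv : (univ : Finset (Fin ℓ)).biUnion p = univ := by
      apply Finset.eq_univ_iff_forall.mpr
      intro x
      obtain ⟨j, hj, _⟩ := hpart x
      exact Finset.mem_biUnion.mpr ⟨j, mem_univ j, hj⟩
    have h2 := hcard univ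
    rw [huniv] at h2
    simpa using h2
  obtain ⟨cs, pend, hdisj, hsub, hcov, hcs, hpend⟩ :=
    stmt7_chunk T hT0 w hw0 ((univ.filter fun j => w j < T/2).toList) (Finset.nodup_toList _)
      (fun a ha => (Finset.mem_filter.mp (Finset.mem_toList.mp ha)).2)
  set G0 : List (Finset (Fin ℓ)) :=
    cs ++ (univ.filter fun j : Fin ℓ => ¬ w j < T/2).toList.map (fun j => {j}) with hG0def
  have hG0b : ∀ s ∈ G0, T/2 ≤ ∑ j ∈ s, w j ∧ ∑ j ∈ s, w j < T := by
    intro s hs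
    rcases List.mem_append.mp hs with h | h
    · exact hcs s h
    · obtain ⟨j, hj, rfl⟩ := List.mem_map.mp h
      have hjb : ¬ w j < T/2 := (Finset.mem_filter.mp (Finset.mem_toList.mp hj)).2
      rw [Finset.sum_singleton]
      exact ⟨not_lt.mp hjb, hsize j⟩
  have hG0d : G0.Pairwise Disjoint := by
    rw [hG0def, List.pairwise_append]
    refine ⟨(List.pairwise_cons.mp hdisj).2, ?_, ?_⟩
    · rw [List.pairwise_map]
      exact (Finset.nodup_toList _).imp
        (fun hne => by simp [Finset.disjoint_singleton_left]; exact hne)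
    · intro s hs t ht
      obtain ⟨j, hj, rfl⟩ := List.mem_map.mp ht
      have hjb : ¬ w j < T/2 := (Finset.mem_filter.mp (Finset.mem_toList.mp hj)).2
      rw [Finset.disjoint_singleton_right]
      intro hjs
      have hmem : j ∈ (univ.filter fun j => w j < T/2).toList := hsub s (by simp [hs]) j hjs
      exact hjb (Finset.mem_filter.mp (Finset.mem_toList.mp hmem)).2
  have hpendd : ∀ s ∈ G0, Disjoint pend s := by
    intro s hs
    rcases List.mem_append.mp hs with h | h
    · exact (List.pairwise_cons.mp hdisj).1 s h
    · obtain ⟨j, hj, rfl⟩ := List.mem_map.mp h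
      have hjb : ¬ w j < T/2 := (Finset.mem_filter.mp (Finset.mem_toList.mp hj)).2
      rw [Finset.disjoint_singleton_right]
      intro hjp
      exact hjb (Finset.mem_filter.mp (Finset.mem_toList.mp (hsub pend (by simp) j hjp))).2
  have hcov0 : ∀ j : Fin ℓ, j ∈ pend ∨ ∃ s ∈ G0, j ∈ s := by
    intro j
    by_cases hj : w j < T/2
    · have hjl : j ∈ (univ.filter fun j => w j < T/2).toList :=
        Finset.mem_toList.mpr (Finset.mem_filter.mpr ⟨mem_univ j, hj⟩)
      obtain ⟨s, hs, hjs⟩ := hcov j hjl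
      rcases List.mem_cons.mp hs with h | h
      · exact Or.inl (h ▸ hjs)
      · exact Or.inr ⟨s, List.mem_append.mpr (Or.inl h), hjs⟩
    · exact Or.inr ⟨{j}, List.mem_append.mpr (Or.inr (List.mem_map.mpr
        ⟨j, Finset.mem_toList.mpr (Finset.mem_filter.mpr ⟨mem_univ j, hj⟩), rfl⟩)),
        Finset.mem_singleton_self j⟩
  -- the final grouping
  have key : ∃ L : List (Finset (Fin ℓ)), L.Pairwise Disjoint ∧
      (∀ j : Fin ℓ, ∃ s ∈ L, j ∈ s) ∧
      (∀ s ∈ L, T/2 ≤ ∑ j ∈ s, w j ∧ ∑ j ∈ s, w j ≤ 3*T/2) := by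
    by_cases hpe : pend = ∅
    · refine ⟨G0, hG0d, ?_, ?_⟩
      · intro j
        rcases hcov0 j with h | h
        · rw [hpe] at h; simp at h
        · exact h
      · intro s hs
        obtain ⟨h1, h2⟩ := hG0b s hs
        exact ⟨h1, by linarith⟩
    · by_cases hnil : G0 = []
      · exfalso
        have hallp : ∀ j : Fin ℓ, j ∈ pend := by
          intro j
          rcases hcov0 j with h | ⟨s, hs, _⟩
          · exact h
          · rw [hnil] at hs; simp at hs
        have hpu : pend = univ := Finset.eq_univ_iff_forall.mpr hallp
        rw [hpu, ← hdtot] at hpend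
        linarith
      · obtain ⟨g, gs, hge⟩ := List.exists_cons_of_ne_nil hnil
        have hPW := hG0d
        rw [hge] at hPW
        obtain ⟨hgd, hgsd⟩ := List.pairwise_cons.mp hPW
        refine ⟨(g ∪ pend) :: gs, ?_, ?_, ?_⟩
        · rw [List.pairwise_cons]
          refine ⟨fun s hs => ?_, hgsd⟩
          rw [Finset.disjoint_union_left]
          exact ⟨hgd s hs, hpendd s (hge ▸ List.mem_cons_of_mem g hs)⟩
        · intro j
          rcases hcov0 j with h | ⟨s, hs, hjs⟩
          · exact ⟨g ∪ pend, List.mem_cons_self, Finset.mem_union_right g h⟩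
          · rw [hge] at hs
            rcases List.mem_cons.mp hs with h1 | h1
            · exact ⟨g ∪ pend, List.mem_cons_self, Finset.mem_union_left pend (h1 ▸ hjs)⟩
            · exact ⟨s, List.mem_cons_of_mem _ h1, hjs⟩
        · intro s hs
          rcases List.mem_cons.mp hs with h1 | h1
          · subst h1
            have hdg : Disjoint g pend := (hpendd g (hge ▸ (List.mem_cons_self : g ∈ g :: gs))).symm
            rw [Finset.sum_union hdg]
            have hg := hG0b g (hge ▸ (List.mem_cons_self : g ∈ g :: gs))
            have hp0 : 0 ≤ ∑ a ∈ pend, w a := Finset.sum_nonneg fun a _ => hw0 a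
            exact ⟨by linarith [hg.1], by linarith [hg.2]⟩
          · have hb := hG0b s (hge ▸ List.mem_cons_of_mem g h1)
            exact ⟨hb.1, by linarith [hb.2]⟩
  clear hcov0 hpendd hG0d hG0b hcs hpend hdisj hsub hcov hG0def
  obtain ⟨L, hLd, hLc, hLb⟩ := key
  have hex : ∀ i : Fin ℓ, ((univ : Finset (Fin L.length)).filter fun k => i ∈ L.get k).Nonempty := by
    intro i
    obtain ⟨s, hs, his⟩ := hLc i
    obtain ⟨k, hk⟩ := List.mem_iff_get.mp hs
    exact ⟨k, Finset.mem_filter.mpr ⟨mem_univ k, hk ▸ his⟩⟩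
  set c : Fin ℓ → Fin L.length :=
    fun i => ((univ : Finset (Fin L.length)).filter fun k => i ∈ L.get k).min' (hex i) with hc
  have hcin : ∀ i, i ∈ L.get (c i) := fun i =>
    (Finset.mem_filter.mp (Finset.min'_mem _ (hex i))).2
  have hkey : ∀ (i : Fin ℓ) (k : Fin L.length), i ∈ L.get k ↔ c i = k := by
    intro i k
    constructor
    · intro hik
      by_contra hne
      have hg := List.pairwise_iff_get.mp hLd
      rcases Ne.lt_or_gt hne with h | h
      · exact absurd hik (Finset.disjoint_left.mp (hg _ _ h) (hcin i))
      · exact absurd (hcin i) (Finset.disjoint_left.mp (hg _ _ h) hik)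
    · rintro rfl
      exact hcin i
  have hfib : ∀ k : Fin L.length, ((univ : Finset (Fin ℓ)).filter fun i => c i = k) = L.get k := by
    intro k
    ext i
    simp only [Finset.mem_filter, mem_univ, true_and]
    exact (hkey i k).symm
  have hqcard : ∀ k : Fin L.length,
      ((((univ : Finset (Fin ℓ)).filter fun i => c i = k).biUnion p).card : ℝ) = ∑ j ∈ L.get k, w j := by
    intro k
    rw [hfib k]
    exact hcard _
  have hbnd : ∀ k : Fin L.length,
      T/2 ≤ ((((univ : Finset (Fin ℓ)).filter fun i => c i = k).biUnion p).card : ℝ) ∧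
      ((((univ : Finset (Fin ℓ)).filter fun i => c i = k).biUnion p).card : ℝ) ≤ 3*T/2 := by
    intro k
    rw [hqcard k]
    exact hLb _ (L.get_mem k)
  have hcover : (univ : Finset (Fin L.length)).biUnion
      (fun k => ((univ : Finset (Fin ℓ)).filter fun i => c i = k).biUnion p) = univ := by
    apply Finset.eq_univ_iff_forall.mpr
    intro x
    obtain ⟨j, hj, _⟩ := hpart x
    exact Finset.mem_biUnion.mpr ⟨c j, mem_univ _,
      Finset.mem_biUnion.mpr ⟨j, Finset.mem_filter.mpr ⟨mem_univ _, rfl⟩, hj⟩⟩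
  have hdq : ∀ k ∈ (univ : Finset (Fin L.length)), ∀ k' ∈ (univ : Finset (Fin L.length)), k ≠ k' →
      Disjoint (((univ : Finset (Fin ℓ)).filter fun i => c i = k).biUnion p)
        (((univ : Finset (Fin ℓ)).filter fun i => c i = k').biUnion p) := by
    intro k _ k' _ hkk'
    rw [hfib k, hfib k', Finset.disjoint_left]
    intro x hx hx'
    obtain ⟨i, hi, hxi⟩ := Finset.mem_biUnion.mp hx
    obtain ⟨i', hi', hxi'⟩ := Finset.mem_biUnion.mp hx'
    have hii : i = i' := (hpart x).unique hxi hxi'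
    subst hii
    exact hkk' (((hkey i k).mp hi).symm.trans ((hkey i k').mp hi'))
  have hcb := Finset.card_biUnion hdq
  rw [hcover] at hcb
  have htot : (d:ℝ) = ∑ k : Fin L.length,
      ((((univ : Finset (Fin ℓ)).filter fun i => c i = k).biUnion p).card : ℝ) := by
    have := congrArg (Nat.cast : ℕ → ℝ) hcb
    simpa using this
  have hlow : (L.length : ℝ) * (T/2) ≤ (d:ℝ) := by
    rw [htot]
    calc (L.length:ℝ) * (T/2) = ∑ _k : Fin L.length, T/2 := by
          simp [Finset.sum_const, Fintype.card_fin, nsmul_eq_mul]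
      _ ≤ _ := Finset.sum_le_sum fun k _ => (hbnd k).1
  have hhigh : (d:ℝ) ≤ (L.length : ℝ) * (3*T/2) := by
    rw [htot]
    calc ∑ k : Fin L.length, ((((univ : Finset (Fin ℓ)).filter fun i => c i = k).biUnion p).card : ℝ)
        ≤ ∑ _k : Fin L.length, 3*T/2 := Finset.sum_le_sum fun k _ => (hbnd k).2
      _ = (L.length:ℝ) * (3*T/2) := by
          simp [Finset.sum_const, Fintype.card_fin, nsmul_eq_mul]
  refine ⟨L.length, fun k => ((univ : Finset (Fin ℓ)).filter fun i => c i = k).biUnion p, c,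
    fun k => rfl, hbnd, ?_, ?_⟩
  · rw [div_le_iff₀ (by linarith : (0:ℝ) < 3*T)]
    linarith
  · rw [le_div_iff₀ hT0]
    linarith
end

section
/- For all sufficiently large d and every integer Δ ≥ 2, suppose (S_1,...,S_ℓ) is a partition of [d] such that each |S_j| < T := d^{Δ/(Δ+1)}. Then for w chosen uniformly at random from {−1,1}^d, Pr[ Σ_{j=1}^ℓ |Σ_{i∈S_j} w_i| < d^{1/(Δ+1)}/10 ] ≤ d^{−d^{1/(Δ+1)}/12}. -/
open Finset Real
namespace Stmt8



lemma cb_sq (k : ℕ) : (Nat.centralBinom k)^2 * (2*k+1) ≤ 16^k := by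
  induction k with
  | zero => simp [Nat.centralBinom_zero]
  | succ k ih =>
    have h := Nat.succ_mul_centralBinom_succ k
    have key : (k+1)^2 * ((Nat.centralBinom (k+1))^2 * (2*(k+1)+1)) ≤ (k+1)^2 * 16^(k+1) := by
      have e1 : (k+1)^2 * ((Nat.centralBinom (k+1))^2 * (2*(k+1)+1))
          = ((k+1) * Nat.centralBinom (k+1))^2 * (2*k+3) := by ring
      rw [e1, h]
      calc (2*(2*k+1)*Nat.centralBinom k)^2 * (2*k+3)
          = (4*(2*k+1)*(2*k+3)) * ((Nat.centralBinom k)^2 * (2*k+1)) := by ring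
        _ ≤ (4*(2*k+1)*(2*k+3)) * 16^k := Nat.mul_le_mul_left _ ih
        _ ≤ ((k+1)^2*16) * 16^k := by nlinarith [Nat.zero_le k]
        _ = (k+1)^2 * 16^(k+1) := by ring
    exact Nat.le_of_mul_le_mul_left key (by positivity)

lemma cb_real (k : ℕ) : (Nat.centralBinom k : ℝ) * Real.sqrt (2*k) ≤ 4^k := by
  have h0 : (0:ℝ) ≤ (Nat.centralBinom k : ℝ) * Real.sqrt (2*k) := by positivity
  have h16 : ((16:ℝ))^k = ((4:ℝ)^k)^2 := by
    rw [← pow_mul, mul_comm k 2, pow_mul]; norm_num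
  have hsq : ((Nat.centralBinom k : ℝ) * Real.sqrt (2*k))^2 ≤ ((4:ℝ)^k)^2 := by
    have hcast : ((Nat.centralBinom k : ℝ))^2 * (2*(k:ℝ)+1) ≤ (16:ℝ)^k := by
      exact_mod_cast cb_sq k
    have hs : (Real.sqrt (2*k))^2 = 2*(k:ℝ) := Real.sq_sqrt (by positivity)
    nlinarith [sq_nonneg ((Nat.centralBinom k : ℝ))]
  exact (pow_le_pow_iff_left₀ h0 (by positivity) (by norm_num)).1 hsq

variable {d : ℕ}

lemma card_agree (S : Finset (Fin d)) (g : Fin d → Bool) :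
    (univ.filter fun w : Fin d → Bool => ∀ i ∈ S, w i = g i).card = 2 ^ (d - S.card) := by
  classical
  have e : {w : Fin d → Bool // ∀ i ∈ S, w i = g i} ≃ ({i : Fin d // i ∉ S} → Bool) :=
    { toFun := fun w i => w.1 i.1
      invFun := fun h => ⟨fun i => if hi : i ∈ S then g i else h ⟨i, hi⟩, fun i hi => by simp [hi]⟩
      left_inv := fun w => by
        apply Subtype.ext; funext i
        by_cases hi : i ∈ S
        · simp [hi, w.2 i hi]
        · simp [hi]
      right_inv := fun h => by funext i; simp [i.2] }
  have h1 : Fintype.card {w : Fin d → Bool // ∀ i ∈ S, w i = g i} = 2 ^ (d - S.card) := by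
    rw [Fintype.card_congr e, Fintype.card_fun, Fintype.card_bool,
      Fintype.card_subtype_compl, Fintype.card_coe, Fintype.card_fin]
  rw [← h1, Fintype.card_subtype]

lemma card_filter_eq (S A : Finset (Fin d)) (hA : A ⊆ S) :
    (univ.filter fun w : Fin d → Bool => S.filter (fun i => w i) = A).card = 2 ^ (d - S.card) := by
  classical
  rw [← card_agree S (fun i => decide (i ∈ A))]
  congr 1
  ext w
  simp only [mem_filter, mem_univ, true_and]
  constructor
  · intro h i hi
    have : w i = true ↔ i ∈ A := by
      rw [← h]; simp [mem_filter, hi]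
    cases hw : w i with
    | false =>
      symm; rw [decide_eq_false_iff_not]
      intro hiA
      have h2 := this.mpr hiA
      rw [hw] at h2; exact Bool.false_ne_true h2
    | true =>
      symm; rw [decide_eq_true_eq]
      exact this.mp hw
  · intro h
    ext i
    simp only [mem_filter]
    constructor
    · rintro ⟨hiS, hwi⟩
      have := h i hiS; rw [hwi] at this
      exact of_decide_eq_true this.symm
    · intro hiA
      refine ⟨hA hiA, ?_⟩
      rw [h i (hA hiA)]; simp [hiA]

lemma card_count (S : Finset (Fin d)) (k : ℕ) :
    (univ.filter fun w : Fin d → Bool => (S.filter fun i => w i).card = k).card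
      = S.card.choose k * 2 ^ (d - S.card) := by
  classical
  rw [Finset.card_eq_sum_card_fiberwise
    (f := fun w : Fin d → Bool => S.filter (fun i => w i)) (t := S.powersetCard k)
    (fun w hw => by
      simp only [Finset.mem_coe, mem_filter, mem_univ, true_and] at hw
      simp [Finset.mem_powersetCard, Finset.filter_subset, hw])]
  have hfib : ∀ A ∈ S.powersetCard k,
      ((univ.filter fun w : Fin d → Bool => (S.filter fun i => w i).card = k).filter
        (fun w => S.filter (fun i => w i) = A)).card = 2 ^ (d - S.card) := by
    intro A hA
    rw [Finset.mem_powersetCard] at hA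
    rw [← card_filter_eq S A hA.1]
    congr 1
    rw [Finset.filter_filter]
    apply Finset.filter_congr
    intro w _
    constructor
    · rintro ⟨_, h⟩; exact h
    · intro h; exact ⟨by rw [h, hA.2], h⟩
  rw [Finset.sum_congr rfl hfib, Finset.sum_const, Finset.card_powersetCard, smul_eq_mul]

variable {d : ℕ}

noncomputable def sig (S : Finset (Fin d)) (w : Fin d → Bool) : ℝ :=
  ∑ i ∈ S, (if w i then (1 : ℝ) else -1)

lemma sig_eq (S : Finset (Fin d)) (w : Fin d → Bool) :
    sig S w = 2 * ((S.filter fun i => w i).card : ℝ) - S.card := by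
  classical
  unfold sig
  rw [← Finset.sum_filter_add_sum_filter_not S (fun i => w i = true)]
  have h1 : ∑ i ∈ S.filter (fun i => w i = true), (if w i then (1:ℝ) else -1)
      = ((S.filter fun i => w i).card : ℝ) := by
    have ha : ∀ i ∈ S.filter (fun i => w i = true), (if w i then (1:ℝ) else -1) = 1 := by
      intro i hi; simp only [mem_filter] at hi; simp [hi.2]
    rw [Finset.sum_congr rfl ha, Finset.sum_const, nsmul_eq_mul, mul_one]
  have h2 : ∑ i ∈ S.filter (fun i => ¬ w i = true), (if w i then (1:ℝ) else -1)
      = -((S.filter fun i => ¬ w i = true).card : ℝ) := by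
    have ha : ∀ i ∈ S.filter (fun i => ¬ w i = true), (if w i then (1:ℝ) else -1) = -1 := by
      intro i hi; simp only [mem_filter] at hi; simp [hi.2]
    rw [Finset.sum_congr rfl ha, Finset.sum_const, nsmul_eq_mul, mul_neg_one]
  rw [h1, h2]
  have h3 : (S.filter fun i => w i = true).card + (S.filter fun i => ¬ w i = true).card = S.card :=
    Finset.card_filter_add_card_filter_not _
  have h4 : ((S.filter fun i => ¬ w i = true).card : ℝ) = (S.card : ℝ) - ((S.filter fun i => w i).card : ℝ) := by
    rw [← h3]; push_cast; ring
  rw [h4]; ring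

lemma sig_ne_zero_abs {S : Finset (Fin d)} {w : Fin d → Bool} (h : sig S w ≠ 0) :
    1 ≤ |sig S w| := by
  have he : sig S w = ((2 * ((S.filter fun i => w i).card : ℤ) - (S.card : ℤ) : ℤ) : ℝ) := by
    rw [sig_eq]; push_cast; ring
  rw [he] at h ⊢
  rw [← Int.cast_abs]
  have : (1:ℤ) ≤ |2 * ((S.filter fun i => w i).card : ℤ) - (S.card : ℤ)| := by
    apply Int.one_le_abs
    intro hc
    exact h (by exact_mod_cast hc)
  exact_mod_cast this

lemma sig_depends (S : Finset (Fin d)) (w w' : Fin d → Bool)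
    (h : ∀ i ∈ S, w i = w' i) : sig S w = sig S w' := by
  unfold sig
  exact Finset.sum_congr rfl (fun i hi => by rw [h i hi])

variable {d : ℕ}

lemma exp_one_le_three : Real.exp 1 ≤ 3 :=
  le_of_lt (lt_trans Real.exp_one_lt_d9 (by norm_num))

lemma log_ineq {s T : ℝ} (hs : s = 2 ∨ 3 ≤ s) (hsT : s ≤ T) (hT : 4 ≤ T) :
    s * Real.log T ≤ T * Real.log s := by
  have hTe : Real.exp 1 ≤ T := le_trans exp_one_le_three (by linarith)
  rcases hs with h2 | h3
  · subst h2
    have h4e : Real.exp 1 ≤ (4:ℝ) := le_trans exp_one_le_three (by norm_num)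
    have key := Real.log_div_self_antitoneOn (by exact h4e) (by exact hTe) hT
    have hlog4 : Real.log 4 = 2 * Real.log 2 := by
      rw [show (4:ℝ) = 2^2 by norm_num, Real.log_pow]; push_cast; ring
    have hT0 : (0:ℝ) < T := by linarith
    simp only at key
    rw [div_le_div_iff₀ hT0 (by norm_num : (0:ℝ) < 4)] at key
    rw [hlog4] at key
    linarith
  · have hse : Real.exp 1 ≤ s := le_trans exp_one_le_three h3
    have key := Real.log_div_self_antitoneOn (by exact hse) (by exact hTe) hsT
    have hs0 : (0:ℝ) < s := by linarith
    have hT0 : (0:ℝ) < T := by linarith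
    simp only at key
    rw [div_le_div_iff₀ hT0 hs0] at key
    linarith

lemma card_sig_zero (S : Finset (Fin d)) (hS : 1 ≤ S.card) {T : ℝ} (hT : 4 ≤ T)
    (hlt : (S.card : ℝ) < T) :
    ((univ.filter fun w : Fin d → Bool => sig S w = 0).card : ℝ)
      ≤ 2 ^ d * Real.exp (-((S.card : ℝ) * Real.log T) / (2 * T)) := by
  classical
  have hzero_iff : ∀ w : Fin d → Bool,
      sig S w = 0 ↔ 2 * (S.filter fun i => w i).card = S.card := by
    intro w
    rw [sig_eq]
    constructor
    · intro h
      have : 2 * ((S.filter fun i => w i).card : ℝ) = (S.card : ℝ) := by linarith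
      exact_mod_cast this
    · intro h
      have : 2 * ((S.filter fun i => w i).card : ℝ) = (S.card : ℝ) := by exact_mod_cast h
      linarith
  rcases Nat.even_or_odd S.card with ⟨k, hk⟩ | hodd
  · -- even case, S.card = 2k
    have hk2 : S.card = 2 * k := by omega
    have hk1 : 1 ≤ k := by omega
    have hkd : 2 * k ≤ d := by
      have := Finset.card_le_univ S
      simp only [Finset.card_univ, Fintype.card_fin] at this
      omega
    have hcards : (univ.filter fun w : Fin d → Bool => sig S w = 0).card
        = S.card.choose k * 2 ^ (d - S.card) := by
      rw [← card_count S k]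
      congr 1
      apply Finset.filter_congr
      intro w _
      rw [hzero_iff w, hk2]
      constructor
      · intro h; omega
      · intro h; omega
    rw [hcards]
    have hch : (S.card.choose k : ℝ) ≤ (Nat.centralBinom k : ℝ) := by
      exact_mod_cast (hk2 ▸ Nat.choose_le_centralBinom k k)
    -- √(2k) ≥ exp(s log T / (2T))
    have hs0 : (0:ℝ) < (S.card : ℝ) := by exact_mod_cast hS
    have hT0 : (0:ℝ) < T := by linarith
    have hli : (S.card : ℝ) * Real.log T ≤ T * Real.log (S.card : ℝ) := by
      apply log_ineq _ (le_of_lt hlt) hT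
      rcases Nat.lt_or_ge S.card 3 with h | h
      · left
        have : S.card = 2 := by omega
        rw [this]; norm_num
      · right; exact_mod_cast h
    have hsqrt : Real.exp ((S.card : ℝ) * Real.log T / (2 * T))
        ≤ Real.sqrt (S.card : ℝ) := by
      rw [show Real.sqrt (S.card : ℝ) = Real.exp (Real.log (S.card : ℝ) / 2) from ?_]
      · apply Real.exp_le_exp.2
        rw [div_le_div_iff₀ (by linarith) (by norm_num)]
        linarith
      · rw [← Real.exp_log (Real.sqrt_pos.2 hs0), Real.log_sqrt (le_of_lt hs0)]
    have hcb : (Nat.centralBinom k : ℝ) * Real.sqrt (S.card : ℝ) ≤ 4 ^ k := by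
      have := cb_real k
      rw [hk2]; push_cast; exact_mod_cast this
    have hsq0 : (0:ℝ) < Real.sqrt (S.card : ℝ) := Real.sqrt_pos.2 hs0
    have hchoose : (S.card.choose k : ℝ) ≤ 4 ^ k * Real.exp (-((S.card : ℝ) * Real.log T) / (2 * T)) := by
      have h1 : (S.card.choose k : ℝ) ≤ 4 ^ k / Real.sqrt (S.card : ℝ) := by
        rw [le_div_iff₀ hsq0]
        calc (S.card.choose k : ℝ) * Real.sqrt (S.card : ℝ)
            ≤ (Nat.centralBinom k : ℝ) * Real.sqrt (S.card : ℝ) := by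
              apply mul_le_mul_of_nonneg_right hch (le_of_lt hsq0)
          _ ≤ 4 ^ k := hcb
      calc (S.card.choose k : ℝ) ≤ 4 ^ k / Real.sqrt (S.card : ℝ) := h1
        _ ≤ 4 ^ k * Real.exp (-((S.card : ℝ) * Real.log T) / (2 * T)) := by
            rw [div_eq_mul_inv]
            apply mul_le_mul_of_nonneg_left _ (by positivity)
            rw [neg_div, Real.exp_neg]
            apply inv_anti₀ (Real.exp_pos _) hsqrt
    calc ((S.card.choose k * 2 ^ (d - S.card) : ℕ) : ℝ)
        = (S.card.choose k : ℝ) * 2 ^ (d - S.card) := by push_cast; ring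
      _ ≤ (4 ^ k * Real.exp (-((S.card : ℝ) * Real.log T) / (2 * T))) * 2 ^ (d - S.card) := by
          apply mul_le_mul_of_nonneg_right hchoose (by positivity)
      _ = 2 ^ d * Real.exp (-((S.card : ℝ) * Real.log T) / (2 * T)) := by
          rw [show (4:ℝ) ^ k = 2 ^ (2 * k) by rw [pow_mul]; norm_num]
          rw [show (2:ℝ) ^ d = 2 ^ (2 * k) * 2 ^ (d - S.card) from ?_]
          · ring
          · rw [← pow_add]
            congr 1
            omega
  · -- odd case: count is zero
    have : (univ.filter fun w : Fin d → Bool => sig S w = 0) = ∅ := by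
      apply Finset.filter_eq_empty_iff.2
      intro w _
      rw [hzero_iff w]
      intro h
      rcases hodd with ⟨k, hk⟩
      omega
    rw [this]
    simp only [Finset.card_empty, Nat.cast_zero]
    positivity

lemma split (U : Finset (Fin d)) (A B : (Fin d → Bool) → Prop)
    [DecidablePred A] [DecidablePred B]
    (hA : ∀ w w' : Fin d → Bool, (∀ i ∈ U, w i = w' i) → A w → A w')
    (hB : ∀ w w' : Fin d → Bool, (∀ i ∉ U, w i = w' i) → B w → B w') :
    (univ.filter fun w => A w ∧ B w).card * 2 ^ d
      = (univ.filter A).card * (univ.filter B).card := by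
  classical
  have hcard : ((univ : Finset (Fin d → Bool))).card = 2 ^ d := by
    simp [Finset.card_univ]
  rw [← hcard, ← Finset.card_product, ← Finset.card_product]
  refine Finset.card_bij'
    (fun wx _ => ((fun i => if i ∈ U then wx.1 i else wx.2 i : Fin d → Bool),
                  (fun i => if i ∈ U then wx.2 i else wx.1 i : Fin d → Bool)))
    (fun wx _ => ((fun i => if i ∈ U then wx.1 i else wx.2 i : Fin d → Bool),
                  (fun i => if i ∈ U then wx.2 i else wx.1 i : Fin d → Bool)))
    ?_ ?_ ?_ ?_
  · rintro ⟨w, x⟩ hw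
    rw [Finset.mem_product] at hw
    obtain ⟨hw1, _⟩ := hw
    rw [Finset.mem_filter] at hw1
    obtain ⟨-, hAw, hBw⟩ := hw1
    rw [Finset.mem_product]
    constructor
    · rw [Finset.mem_filter]
      exact ⟨Finset.mem_univ _, hA w _ (fun i hi => (if_pos hi).symm) hAw⟩
    · rw [Finset.mem_filter]
      exact ⟨Finset.mem_univ _, hB w _ (fun i hi => (if_neg hi).symm) hBw⟩
  · rintro ⟨w1, w2⟩ hw
    rw [Finset.mem_product] at hw
    obtain ⟨hw1, hw2⟩ := hw
    rw [Finset.mem_filter] at hw1 hw2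
    rw [Finset.mem_product]
    constructor
    · rw [Finset.mem_filter]
      refine ⟨Finset.mem_univ _, ?_, ?_⟩
      · exact hA w1 _ (fun i hi => (if_pos hi).symm) hw1.2
      · exact hB w2 _ (fun i hi => (if_neg hi).symm) hw2.2
    · exact Finset.mem_univ _
  · rintro ⟨w, x⟩ -
    apply Prod.ext <;> · simp only; funext i; by_cases hi : i ∈ U <;> simp [hi]
  · rintro ⟨w1, w2⟩ -
    apply Prod.ext <;> · simp only; funext i; by_cases hi : i ∈ U <;> simp [hi]

lemma prod_blocks {ℓ : ℕ} (p : Fin ℓ → Finset (Fin d)) (Z : Finset (Fin ℓ)) :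
    (∀ j ∈ Z, ∀ j' ∈ Z, j ≠ j' → ∀ i, i ∈ p j → i ∉ p j') →
    ((univ.filter fun w : Fin d → Bool => ∀ j ∈ Z, sig (p j) w = 0).card : ℝ)
      = 2 ^ d * ∏ j ∈ Z,
          (((univ.filter fun w : Fin d → Bool => sig (p j) w = 0).card : ℝ) / 2 ^ d) := by
  classical
  induction Z using Finset.induction_on with
  | empty => intro _; simp
  | @insert j0 Z hj0 ih =>
    intro hdis
    have h2 : (0:ℝ) < 2 ^ d := by positivity
    have hsplit := split (p j0) (fun w => sig (p j0) w = 0)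
      (fun w => ∀ j ∈ Z, sig (p j) w = 0)
      (fun w w' hag h => by
        show sig (p j0) w' = 0
        rw [← sig_depends (p j0) w w' hag]; exact h)
      (fun w w' hag h => by
        show ∀ j ∈ Z, sig (p j) w' = 0
        intro j hj
        rw [← sig_depends (p j) w w' (fun i hi =>
          hag i (hdis j (Finset.mem_insert_of_mem hj) j0 (Finset.mem_insert_self _ _)
            (fun he => hj0 (he ▸ hj)) i hi))]
        exact h j hj)
    have ihe := ih (fun j hj j' hj' hne =>
      hdis j (Finset.mem_insert_of_mem hj) j' (Finset.mem_insert_of_mem hj') hne)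
    have hfilt : (univ.filter fun w : Fin d → Bool => ∀ j ∈ insert j0 Z, sig (p j) w = 0)
        = (univ.filter fun w : Fin d → Bool =>
            sig (p j0) w = 0 ∧ ∀ j ∈ Z, sig (p j) w = 0) := by
      apply Finset.filter_congr
      intro w _
      exact Finset.forall_mem_insert _ _ _
    rw [hfilt, Finset.prod_insert hj0]
    have hc := congrArg (fun n : ℕ => (n : ℝ)) hsplit
    push_cast at hc
    have h2' : ((2:ℝ)^d) ≠ 0 := ne_of_gt h2
    set P := ∏ j ∈ Z, (((univ.filter fun w : Fin d → Bool => sig (p j) w = 0).card : ℝ) / 2 ^ d) with hP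
    rw [ihe] at hc
    apply mul_right_cancel₀ h2'
    rw [hc]
    field_simp

end Stmt8

open Stmt8 in
set_option maxHeartbeats 2000000 in
/-- for sufficiently large `d`, any `Δ ≥ 2`, and any partition of `[d]`
into blocks of size `< d^{Δ/(Δ+1)}`, a uniformly random sign vector `w ∈ {-1,1}^d`
satisfies `Σ_j |w_{S_j}| ≥ d^{1/(Δ+1)}/10` except with probability at most
`d^{-d^{1/(Δ+1)}/12}`. -/
theorem stmt8 :
    ∃ d₀ : ℕ, ∀ d : ℕ, d₀ ≤ d → ∀ Δ : ℕ, 2 ≤ Δ →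
      ∀ (ℓ : ℕ) (p : Fin ℓ → Finset (Fin d)),
        (∀ x : Fin d, ∃! j, x ∈ p j) →
        (∀ j, ((p j).card : ℝ) < (d : ℝ) ^ ((Δ : ℝ) / (Δ + 1))) →
        ((univ.filter fun w : Fin d → Bool =>
              (∑ j, |∑ i ∈ p j, (if w i then (1 : ℝ) else -1)|) <
                (d : ℝ) ^ ((1 : ℝ) / (Δ + 1)) / 10).card : ℝ) / 2 ^ d ≤
          (d : ℝ) ^ (-(d : ℝ) ^ ((1 : ℝ) / (Δ + 1)) / 12) := by
  classical
  refine ⟨Nat.ceil (Real.exp 6) + 1, ?_⟩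
  intro d hd Δ hΔ ℓ p hpart hsize
  -- basic real facts about d
  have hdR : Real.exp 6 ≤ (d : ℝ) := by
    calc Real.exp 6 ≤ (Nat.ceil (Real.exp 6) : ℝ) := Nat.le_ceil _
      _ ≤ (d : ℝ) := by exact_mod_cast le_trans (Nat.le_succ _) hd
  have h34 : (4:ℝ) ≤ Real.exp 3 := by have := Real.add_one_le_exp 3; linarith
  have h16 : (16:ℝ) ≤ Real.exp 6 := by
    have he : Real.exp 6 = Real.exp 3 * Real.exp 3 := by rw [← Real.exp_add]; norm_num
    nlinarith
  have hd16 : (16:ℝ) ≤ (d:ℝ) := le_trans h16 hdR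
  have hd0 : (0:ℝ) < (d:ℝ) := by linarith
  have hd1 : (1:ℝ) ≤ (d:ℝ) := by linarith
  have hd2 : (2:ℝ) ≤ (d:ℝ) := by linarith
  have hlog6 : (6:ℝ) ≤ Real.log d := (Real.le_log_iff_exp_le hd0).2 hdR
  have hlogpos : (0:ℝ) < Real.log d := by linarith
  have hΔ1 : (0:ℝ) < (Δ:ℝ) + 1 := by positivity
  have hΔ2 : (2:ℝ) ≤ (Δ:ℝ) := by exact_mod_cast hΔ
  set m : ℝ := (d : ℝ) ^ ((1 : ℝ) / (Δ + 1)) with hmdef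
  set T : ℝ := (d : ℝ) ^ ((Δ : ℝ) / (Δ + 1)) with hTdef
  have hm1 : (1:ℝ) ≤ m := by
    rw [hmdef, show (1:ℝ) = (d:ℝ) ^ (0:ℝ) by rw [Real.rpow_zero]]
    exact Real.rpow_le_rpow_of_exponent_le hd1 (by positivity)
  have hmT : m * T = (d:ℝ) := by
    rw [hmdef, hTdef, ← Real.rpow_add hd0]
    rw [show (1:ℝ)/(Δ+1) + (Δ:ℝ)/(Δ+1) = 1 by rw [← add_div, div_eq_one_iff_eq (ne_of_gt hΔ1)]; ring]
    exact Real.rpow_one _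
  have hT4 : (4:ℝ) ≤ T := by
    have h12 : (d:ℝ) ^ ((1:ℝ)/2) ≤ T := by
      rw [hTdef]
      apply Real.rpow_le_rpow_of_exponent_le hd1
      rw [div_le_div_iff₀ (by norm_num) hΔ1]
      linarith
    have : (4:ℝ) ≤ (d:ℝ) ^ ((1:ℝ)/2) := by
      rw [← Real.sqrt_eq_rpow]
      rw [Real.le_sqrt (by norm_num) (le_of_lt hd0)]
      nlinarith
    linarith
  have hTpos : (0:ℝ) < T := by linarith
  have hmpos : (0:ℝ) < m := by linarith
  have hlogT : Real.log T = ((Δ:ℝ)/(Δ+1)) * Real.log d := Real.log_rpow hd0 _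
  have hlogT23 : (2/3) * Real.log d ≤ Real.log T := by
    rw [hlogT]
    apply mul_le_mul_of_nonneg_right _ (le_of_lt hlogpos)
    rw [div_le_div_iff₀ (by norm_num) hΔ1]
    linarith
  have hlogTpos : (0:ℝ) ≤ Real.log T := by linarith
  -- partition facts
  have hdisj : ∀ j j' : Fin ℓ, j ≠ j' → ∀ i, i ∈ p j → i ∉ p j' := by
    intro j j' hne i hij hij'
    obtain ⟨j0, _, huni⟩ := hpart i
    exact hne ((huni j hij).trans (huni j' hij').symm)
  have hcover : (univ : Finset (Fin ℓ)).biUnion p = (univ : Finset (Fin d)) := by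
    ext x
    simp only [Finset.mem_biUnion, Finset.mem_univ, true_and, iff_true]
    obtain ⟨j, hj, -⟩ := hpart x
    exact ⟨j, hj⟩
  have hsum : ∑ j : Fin ℓ, (p j).card = d := by
    rw [← Finset.card_biUnion (fun j _ j' _ hne => Finset.disjoint_left.2 (hdisj j j' hne))]
    rw [hcover, Finset.card_univ, Fintype.card_fin]
  set J0 : Finset (Fin ℓ) := univ.filter (fun j => (p j).Nonempty) with hJ0def
  have hsumJ0 : ∑ j ∈ J0, ((p j).card : ℝ) = (d:ℝ) := by
    rw [hJ0def]
    rw [Finset.sum_filter_of_ne (fun j _ h => Finset.card_pos.1 (Nat.pos_of_ne_zero (by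
      intro h0; rw [h0] at h; simp at h)))]
    exact_mod_cast congrArg (fun n : ℕ => (n:ℝ)) hsum
  have hJ0card : J0.card ≤ d := by
    calc J0.card = ∑ _j ∈ J0, 1 := by rw [Finset.sum_const, smul_eq_mul, mul_one]
      _ ≤ ∑ j ∈ J0, (p j).card := Finset.sum_le_sum (fun j hj => by
          rw [hJ0def] at hj; simp only [Finset.mem_filter] at hj
          exact Finset.card_pos.2 hj.2)
      _ ≤ ∑ j : Fin ℓ, (p j).card := Finset.sum_le_sum_of_subset (Finset.filter_subset _ _)
      _ = d := hsum
  -- abbreviations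
  set E := univ.filter fun w : Fin d → Bool =>
      (∑ j, |∑ i ∈ p j, (if w i then (1 : ℝ) else -1)|) < m / 10 with hEdef
  set F : Finset (Fin ℓ) → Finset (Fin d → Bool) :=
    fun B => univ.filter (fun w => ∀ j ∈ J0 \ B, sig (p j) w = 0) with hFdef
  set Bs : Finset (Finset (Fin ℓ)) := J0.powerset.filter (fun B => (B.card : ℝ) < m / 10) with hBdef
  have hEsub : E ⊆ Bs.biUnion F := by
    intro w hw
    rw [hEdef, Finset.mem_filter] at hw
    have hsumlt : (∑ j, |sig (p j) w|) < m / 10 := hw.2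
    set Bw : Finset (Fin ℓ) := J0.filter (fun j => sig (p j) w ≠ 0) with hBwdef
    have hBwcard : (Bw.card : ℝ) < m / 10 := by
      have h1 : (Bw.card : ℝ) * 1 ≤ ∑ j ∈ Bw, |sig (p j) w| := by
        have := Finset.card_nsmul_le_sum Bw (fun j => |sig (p j) w|) 1 (fun j hj => by
          rw [hBwdef, Finset.mem_filter] at hj
          exact sig_ne_zero_abs hj.2)
        simpa [nsmul_eq_mul] using this
      have h2 : ∑ j ∈ Bw, |sig (p j) w| ≤ ∑ j, |sig (p j) w| :=
        Finset.sum_le_sum_of_subset_of_nonneg (Finset.subset_univ _) (fun j _ _ => abs_nonneg _)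
      calc (Bw.card : ℝ) = (Bw.card : ℝ) * 1 := by ring
        _ ≤ ∑ j ∈ Bw, |sig (p j) w| := h1
        _ ≤ ∑ j, |sig (p j) w| := h2
        _ < m / 10 := hsumlt
    rw [Finset.mem_biUnion]
    refine ⟨Bw, ?_, ?_⟩
    · rw [hBdef, Finset.mem_filter, Finset.mem_powerset]
      exact ⟨Finset.filter_subset _ _, hBwcard⟩
    · simp only [hFdef]
      rw [Finset.mem_filter]
      refine ⟨Finset.mem_univ _, fun j hj => ?_⟩
      rw [Finset.mem_sdiff] at hj
      by_contra hne
      exact hj.2 (by rw [hBwdef, Finset.mem_filter]; exact ⟨hj.1, hne⟩)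
  -- per-B bound
  have hFbound : ∀ B ∈ Bs, ((F B).card : ℝ) ≤ 2 ^ d * Real.exp (-(3/10) * m * Real.log d) := by
    intro B hB
    rw [hBdef, Finset.mem_filter, Finset.mem_powerset] at hB
    obtain ⟨hBsub, hBcard⟩ := hB
    have hprod := prod_blocks p (J0 \ B) (fun j hj j' hj' hne => hdisj j j' hne)
    have hq : ∀ j ∈ J0 \ B,
        (((univ.filter fun w : Fin d → Bool => sig (p j) w = 0).card : ℝ) / 2 ^ d)
        ≤ Real.exp (-(((p j).card : ℝ) * Real.log T) / (2 * T)) := by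
      intro j hj
      rw [Finset.mem_sdiff, hJ0def, Finset.mem_filter] at hj
      have hcard1 : 1 ≤ (p j).card := Finset.card_pos.2 hj.1.2
      have hb := card_sig_zero (p j) hcard1 hT4 (hsize j)
      rw [div_le_iff₀ (by positivity)]
      rw [mul_comm]
      exact hb
    have hsumZ : (9/10) * (d:ℝ) ≤ ∑ j ∈ J0 \ B, ((p j).card : ℝ) := by
      rw [Finset.sum_sdiff_eq_sub hBsub, hsumJ0]
      have hBsum : ∑ j ∈ B, ((p j).card : ℝ) ≤ (B.card : ℝ) * T := by
        have := Finset.sum_le_card_nsmul B (fun j => ((p j).card : ℝ)) T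
          (fun j _ => le_of_lt (hsize j))
        simpa [nsmul_eq_mul] using this
      have hBT : (B.card : ℝ) * T ≤ (d:ℝ)/10 := by
        calc (B.card : ℝ) * T ≤ (m/10) * T :=
              mul_le_mul_of_nonneg_right (le_of_lt hBcard) (le_of_lt hTpos)
          _ = (d:ℝ)/10 := by rw [← hmT]; ring
      linarith
    calc ((F B).card : ℝ)
        = 2 ^ d * ∏ j ∈ J0 \ B,
            (((univ.filter fun w : Fin d → Bool => sig (p j) w = 0).card : ℝ) / 2 ^ d) := by
          simp only [hFdef]; exact hprod
      _ ≤ 2 ^ d * ∏ j ∈ J0 \ B, Real.exp (-(((p j).card:ℝ) * Real.log T)/(2*T)) := by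
          apply mul_le_mul_of_nonneg_left _ (by positivity)
          exact Finset.prod_le_prod (fun j _ => by positivity) hq
      _ = 2 ^ d * Real.exp (∑ j ∈ J0 \ B, -(((p j).card:ℝ) * Real.log T)/(2*T)) := by
          rw [Real.exp_sum]
      _ ≤ 2 ^ d * Real.exp (-(3/10) * m * Real.log d) := by
          apply mul_le_mul_of_nonneg_left _ (by positivity)
          apply Real.exp_le_exp.2
          have hsum_eq : ∑ j ∈ J0 \ B, -(((p j).card:ℝ) * Real.log T)/(2*T)
              = (∑ j ∈ J0 \ B, ((p j).card:ℝ)) * (-(Real.log T)/(2*T)) := by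
            rw [Finset.sum_mul]
            exact Finset.sum_congr rfl (fun j _ => by ring)
          rw [hsum_eq]
          have hc_nonpos : -(Real.log T)/(2*T) ≤ 0 := by
            apply div_nonpos_of_nonpos_of_nonneg (by linarith) (by linarith)
          calc (∑ j ∈ J0 \ B, ((p j).card:ℝ)) * (-(Real.log T)/(2*T))
              ≤ ((9/10) * (d:ℝ)) * (-(Real.log T)/(2*T)) :=
                mul_le_mul_of_nonpos_right hsumZ hc_nonpos
            _ = -(9/20) * m * Real.log T := by
                rw [← hmT]; field_simp; ring
            _ ≤ -(3/10) * m * Real.log d := by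
                nlinarith [mul_le_mul_of_nonneg_left hlogT23 (le_of_lt hmpos)]
  -- counting Bs
  set b : ℕ := Nat.floor (m/10) with hbdef
  have hbm : (b:ℝ) ≤ m/10 := Nat.floor_le (by positivity)
  have hcardBs : (Bs.card : ℝ) ≤ (m/10 + 1) * Real.exp ((m/5) * Real.log d) := by
    have hsubP : Bs ⊆ J0.powerset.filter (fun B => B.card ≤ b) := by
      intro B hB
      rw [hBdef, Finset.mem_filter] at hB
      rw [Finset.mem_filter]
      exact ⟨hB.1, Nat.le_floor (le_of_lt hB.2)⟩
    have hfib : ∀ i ∈ Finset.range (b+1),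
        ((J0.powerset.filter (fun B => B.card ≤ b)).filter (fun B => B.card = i)).card
          ≤ (d+1)^b := by
      intro i hi
      rw [Finset.mem_range] at hi
      calc ((J0.powerset.filter (fun B => B.card ≤ b)).filter (fun B => B.card = i)).card
          ≤ (J0.powersetCard i).card := Finset.card_le_card (fun B hB => by
            rw [Finset.mem_filter, Finset.mem_filter, Finset.mem_powerset] at hB
            rw [Finset.mem_powersetCard]
            exact ⟨hB.1.1, hB.2⟩)
        _ = J0.card.choose i := Finset.card_powersetCard i J0
        _ ≤ J0.card ^ i := Nat.choose_le_pow _ _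
        _ ≤ (d+1) ^ i := Nat.pow_le_pow_left (by omega) i
        _ ≤ (d+1) ^ b := Nat.pow_le_pow_right (by omega) (by omega)
    have hPcard : (J0.powerset.filter (fun B => B.card ≤ b)).card ≤ (b+1) * (d+1)^b := by
      rw [Finset.card_eq_sum_card_fiberwise (f := Finset.card) (t := Finset.range (b+1))
        (fun B hB => by rw [Finset.mem_coe, Finset.mem_filter] at hB; rw [Finset.mem_coe, Finset.mem_range]; omega)]
      calc ∑ i ∈ Finset.range (b+1),
            ((J0.powerset.filter (fun B => B.card ≤ b)).filter (fun B => B.card = i)).card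
          ≤ ∑ _i ∈ Finset.range (b+1), (d+1)^b := Finset.sum_le_sum hfib
        _ = (b+1) * (d+1)^b := by rw [Finset.sum_const, Finset.card_range, smul_eq_mul]
    have h1 : (Bs.card : ℝ) ≤ ((b:ℝ)+1) * ((d:ℝ)+1)^b := by
      have := le_trans (Finset.card_le_card hsubP) hPcard
      calc (Bs.card : ℝ) ≤ (((b+1) * (d+1)^b : ℕ) : ℝ) := by exact_mod_cast this
        _ = ((b:ℝ)+1) * ((d:ℝ)+1)^b := by push_cast; ring
    have hlogd1 : Real.log ((d:ℝ)+1) ≤ 2 * Real.log d := by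
      calc Real.log ((d:ℝ)+1) ≤ Real.log ((d:ℝ)^(2:ℕ)) :=
            Real.log_le_log (by positivity) (by nlinarith)
        _ = 2 * Real.log d := by rw [Real.log_pow]; norm_num
    have h2 : ((d:ℝ)+1)^b ≤ Real.exp ((m/5) * Real.log d) := by
      have he : ((d:ℝ)+1)^b = Real.exp ((b:ℝ) * Real.log ((d:ℝ)+1)) := by
        rw [Real.exp_nat_mul, Real.exp_log (by positivity)]
      rw [he]
      apply Real.exp_le_exp.2
      have hlog1pos : (0:ℝ) ≤ Real.log ((d:ℝ)+1) := Real.log_nonneg (by linarith)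
      calc (b:ℝ) * Real.log ((d:ℝ)+1) ≤ (m/10) * Real.log ((d:ℝ)+1) :=
            mul_le_mul_of_nonneg_right hbm hlog1pos
        _ ≤ (m/10) * (2 * Real.log d) := by
            apply mul_le_mul_of_nonneg_left hlogd1 (by positivity)
        _ = (m/5) * Real.log d := by ring
    calc (Bs.card : ℝ) ≤ ((b:ℝ)+1) * ((d:ℝ)+1)^b := h1
      _ ≤ (m/10 + 1) * Real.exp ((m/5) * Real.log d) := by
          apply mul_le_mul (by linarith) h2 (by positivity) (by positivity)
  -- final assembly
  have hmain : (E.card : ℝ) ≤ (Bs.card : ℝ) * (2^d * Real.exp (-(3/10) * m * Real.log d)) := by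
    calc (E.card : ℝ) ≤ ((Bs.biUnion F).card : ℝ) := by
          exact_mod_cast Finset.card_le_card hEsub
      _ ≤ ∑ B ∈ Bs, ((F B).card : ℝ) := by exact_mod_cast Finset.card_biUnion_le
      _ ≤ (Bs.card : ℝ) * (2^d * Real.exp (-(3/10) * m * Real.log d)) := by
          have := Finset.sum_le_card_nsmul Bs (fun B => ((F B).card : ℝ)) _ hFbound
          simpa [nsmul_eq_mul] using this
  have h2d : (0:ℝ) < 2^d := by positivity
  have hfinal : (E.card : ℝ) / 2^d ≤ Real.exp (-(1/12) * m * Real.log d) := by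
    have hstep1 : (E.card : ℝ) / 2^d ≤ (Bs.card : ℝ) * Real.exp (-(3/10) * m * Real.log d) := by
      rw [div_le_iff₀ h2d]
      calc (E.card : ℝ) ≤ (Bs.card : ℝ) * (2^d * Real.exp (-(3/10) * m * Real.log d)) := hmain
        _ = (Bs.card : ℝ) * Real.exp (-(3/10) * m * Real.log d) * 2^d := by ring
    have hstep2 : (m/10 + 1) ≤ Real.exp ((m/60) * Real.log d) := by
      have := Real.add_one_le_exp ((m/60) * Real.log d)
      have hx : m/10 ≤ (m/60) * Real.log d := by nlinarith
      linarith
    calc (E.card : ℝ) / 2^d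
        ≤ (Bs.card : ℝ) * Real.exp (-(3/10) * m * Real.log d) := hstep1
      _ ≤ ((m/10 + 1) * Real.exp ((m/5) * Real.log d)) * Real.exp (-(3/10) * m * Real.log d) := by
          apply mul_le_mul_of_nonneg_right hcardBs (le_of_lt (Real.exp_pos _))
      _ ≤ (Real.exp ((m/60) * Real.log d) * Real.exp ((m/5) * Real.log d))
            * Real.exp (-(3/10) * m * Real.log d) := by
          apply mul_le_mul_of_nonneg_right _ (le_of_lt (Real.exp_pos _))
          apply mul_le_mul_of_nonneg_right hstep2 (le_of_lt (Real.exp_pos _))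
      _ = Real.exp ((m/60) * Real.log d + (m/5) * Real.log d + -(3/10) * m * Real.log d) := by
          rw [Real.exp_add, Real.exp_add]
      _ = Real.exp (-(1/12) * m * Real.log d) := by
          congr 1
          ring
  calc (E.card : ℝ) / 2^d ≤ Real.exp (-(1/12) * m * Real.log d) := hfinal
    _ = (d:ℝ) ^ (-m/12) := by
        rw [Real.rpow_def_of_pos hd0]
        congr 1
        ring
end
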